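/- Let K be a field, G a group, V a finite-dimensional K-vector space of dimension n, and ρ : G → GL(V) a representation such that V is the internal direct sum of n one-dimensional subspaces L_1,…,L_n on which G acts by pairwise distinct characters χ_1,…,χ_n : G → K (i.e., ρ(g)v = χ_k(g) • v for v ∈ L_k). Let r ≥ 1 and n_1,…,n_r be positive integers with n_1 + ⋯ + n_r = n. Then the set of r-tuples (W_1,…,W_r) of G-invariant subspaces of V that form an internal direct sum decomposition of V with dim W_i = n_i for each i is finite, of cardinality equal to the multinomial coefficient n!/(n_1!⋯n_r!). -/

import Mathlib

open Finset

lemma aux_count : ∀ (r : ℕ) (α : Type*) [Fintype α] [DecidableEq α] (nf : Fin r → ℕ),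
    Fintype.card α = ∑ i, nf i →
    (Finset.univ.filter fun f : α → Fin r =>
        ∀ i, (Finset.univ.filter fun k => f k = i).card = nf i).card
      * ∏ i, (nf i).factorial = (∑ i, nf i).factorial := by
  intro r
  induction r with
  | zero =>
    intro α _ _ nf hcard
    have hE : IsEmpty α := Fintype.card_eq_zero_iff.mp (by simpa using hcard)
    rw [Finset.filter_true_of_mem (fun f _ i => i.elim0)]
    rw [Finset.card_univ, Fintype.card_fun]
    simp [hcard]
  | succ r IH =>
    intro α _ _ nf hcard
    set m := nf (Fin.last r) with hm
    set n := Fintype.card α with hn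
    clear_value m n
    have hsum' : ∑ i, nf i = (∑ i : Fin r, nf i.castSucc) + m := by
      rw [hm]; exact Fin.sum_univ_castSucc nf
    have hnm : n = (∑ i : Fin r, nf i.castSucc) + m := hcard.trans hsum'
    have hmn : m ≤ n := hnm ▸ Nat.le_add_left m _
    set S := Finset.univ.filter (fun f : α → Fin (r+1) =>
      ∀ i, (Finset.univ.filter fun k => f k = i).card = nf i) with hS
    have hstep1 : S.card = ∑ T ∈ Finset.univ.powersetCard m,
        (S.filter fun f => (Finset.univ.filter fun k => f k = Fin.last r) = T).card := by
      apply Finset.card_eq_sum_card_fiberwise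
      intro f hf
      rw [Finset.mem_coe, Finset.mem_powersetCard]
      exact ⟨Finset.subset_univ _, hm ▸ (Finset.mem_filter.mp (Finset.mem_coe.mp hf)).2 (Fin.last r)⟩
    have hstep2 : ∀ T ∈ Finset.univ.powersetCard m,
        (S.filter fun f => (Finset.univ.filter fun k => f k = Fin.last r) = T).card
          * ∏ i : Fin r, (nf i.castSucc).factorial
        = (∑ i : Fin r, nf i.castSucc).factorial := by
      intro T hT
      obtain ⟨-, hTcard⟩ := Finset.mem_powersetCard.mp hT
      have hcard' : Fintype.card {a : α // a ∉ T} = ∑ i : Fin r, nf i.castSucc := by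
        have h1 : Fintype.card {a : α // a ∉ T} = (Finset.univ.filter fun a : α => a ∉ T).card :=
          Fintype.card_subtype _
        have h2 : (Finset.univ.filter fun a : α => a ∉ T) = Tᶜ := by
          ext a; simp
        rw [h1, h2, Finset.card_compl, hTcard, ← hn, hnm, Nat.add_sub_cancel]
      -- the target of the bijection
      set Tgt := Finset.univ.filter fun g : {a : α // a ∉ T} → Fin r =>
          ∀ i, (Finset.univ.filter fun k => g k = i).card = nf i.castSucc with hTgt
      have hbij : (S.filter fun f => (Finset.univ.filter fun k => f k = Fin.last r) = T).card
          = Tgt.card := by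
      -- map from Tgt to the source
        refine (Finset.card_bij
          (fun (g : {a : α // a ∉ T} → Fin r) (_ : g ∈ Tgt) =>
            fun a : α => if h : a ∈ T then Fin.last r else (g ⟨a, h⟩).castSucc)
          ?_ ?_ ?_).symm
        · -- maps into the source
          intro g hg
          have hgfib : ∀ i, (Finset.univ.filter fun k => g k = i).card = nf i.castSucc :=
            (Finset.mem_filter.mp hg).2
          have hfibT : (Finset.univ.filter fun a : α =>
              (if h : a ∈ T then Fin.last r else (g ⟨a, h⟩).castSucc) = Fin.last r) = T := by
            ext a
            simp only [Finset.mem_filter, Finset.mem_univ, true_and]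
            by_cases h : a ∈ T
            · simp [h]
            · simp only [dif_neg h]
              exact iff_of_false (Fin.castSucc_lt_last _).ne h
          rw [Finset.mem_filter]
          refine ⟨Finset.mem_filter.mpr ⟨Finset.mem_univ _, ?_⟩, hfibT⟩
          intro i
          induction i using Fin.lastCases with
          | last => rw [hfibT, hTcard]; exact hm
          | cast i' =>
            rw [← hgfib i']
            refine (Finset.card_bij (fun (a : {a : α // a ∉ T}) (_ : _) => a.1) ?_ ?_ ?_).symm
            · intro a ha
              simp only [Finset.mem_filter, Finset.mem_univ, true_and] at ha ⊢
              rw [dif_neg a.2, ha]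
            · intro a _ b _ h
              exact Subtype.ext h
            · intro k hk
              simp only [Finset.mem_filter, Finset.mem_univ, true_and] at hk
              by_cases h : k ∈ T
              · rw [dif_pos h] at hk
                exact absurd hk.symm (Fin.castSucc_lt_last i').ne
              · rw [dif_neg h] at hk
                refine ⟨⟨k, h⟩, ?_, rfl⟩
                simp only [Finset.mem_filter, Finset.mem_univ, true_and]
                exact Fin.castSucc_injective _ hk
        · -- injective
          intro g hg g' hg' h
          funext a
          have h2 := congrFun h a.1
          simp only [dif_neg a.2] at h2
          exact Fin.castSucc_injective _ h2
        · -- surjective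
          intro f hf
          have hfS : ∀ j, (Finset.univ.filter fun k => f k = j).card = nf j :=
            (Finset.mem_filter.mp ((Finset.mem_filter.mp hf).1)).2
          have hfib : (Finset.univ.filter fun k => f k = Fin.last r) = T :=
            (Finset.mem_filter.mp hf).2
          have hne : ∀ a : {a : α // a ∉ T}, f a.1 ≠ Fin.last r := by
            intro a hlast
            have hmem : a.1 ∈ Finset.univ.filter fun k => f k = Fin.last r :=
              Finset.mem_filter.mpr ⟨Finset.mem_univ _, hlast⟩
            rw [hfib] at hmem
            exact a.2 hmem
          refine ⟨fun a => (f a.1).castPred (hne a), ?_, ?_⟩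
          · -- belongs to Tgt
            refine Finset.mem_filter.mpr ⟨Finset.mem_univ _, fun i => ?_⟩
            rw [← hfS i.castSucc]
            refine Finset.card_bij (fun (a : {a : α // a ∉ T}) (_ : _) => a.1) ?_ ?_ ?_
            · intro a ha
              simp only [Finset.mem_filter, Finset.mem_univ, true_and] at ha ⊢
              rw [← ha, Fin.castSucc_castPred]
            · intro a _ b _ h
              exact Subtype.ext h
            · intro k hk
              simp only [Finset.mem_filter, Finset.mem_univ, true_and] at hk
              have hkT : k ∉ T := by
                rw [← hfib]
                simp only [Finset.mem_filter, Finset.mem_univ, true_and, not_and]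
                intro h'
                exact absurd (hk ▸ h') (Fin.castSucc_lt_last i).ne
              refine ⟨⟨k, hkT⟩, ?_, rfl⟩
              simp only [Finset.mem_filter, Finset.mem_univ, true_and]
              apply Fin.castSucc_injective
              rw [Fin.castSucc_castPred, hk]
          · -- composition gives back f
            funext a
            by_cases h : a ∈ T
            · simp only [dif_pos h]
              have h3 : a ∈ Finset.univ.filter fun k => f k = Fin.last r := by
                rw [hfib]; exact h
              exact ((Finset.mem_filter.mp h3).2).symm
            · simp only [dif_neg h, Fin.castSucc_castPred]
      rw [hbij]
      exact IH _ _ hcard'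
    rw [Fin.prod_univ_castSucc (f := fun i => (nf i).factorial), hstep1, ← hm, ← mul_assoc,
      Finset.sum_mul]
    calc (∑ T ∈ Finset.univ.powersetCard m,
            (S.filter fun f => (Finset.univ.filter fun k => f k = Fin.last r) = T).card
              * ∏ i : Fin r, (nf i.castSucc).factorial) * m.factorial
        = (∑ _T ∈ Finset.univ.powersetCard m,
            (∑ i : Fin r, nf i.castSucc).factorial) * m.factorial := by
          rw [Finset.sum_congr rfl hstep2]
      _ = n.choose m * (∑ i : Fin r, nf i.castSucc).factorial * m.factorial := by
          rw [Finset.sum_const, smul_eq_mul, Finset.card_powersetCard, Finset.card_univ, ← hn]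
      _ = n.choose m * m.factorial * (n - m).factorial := by
          have h9 : (∑ i : Fin r, nf i.castSucc) = n - m := by
            rw [hnm, Nat.add_sub_cancel]
          rw [h9]; ring
      _ = (∑ i, nf i).factorial := by
          rw [Nat.choose_mul_factorial_mul_factorial hmn, hcard]

open Finset Submodule Module

/-- Components of an element of an invariant subspace are again in the subspace. -/
lemma aux_components {K : Type*} [Field K] {G : Type*} [Group G]
    {V : Type*} [AddCommGroup V] [Module K V]
    {n : ℕ} (ρ : Representation K G V) (L : Fin n → Submodule K V)
    (χ : Fin n → G → K)
    (hχ : ∀ (k : Fin n) (g : G), ∀ v ∈ L k, ρ g v = χ k g • v)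
    (hdist : Function.Injective χ)
    (W : Submodule K V) (hW : ∀ (g : G), ∀ w ∈ W, ρ g w ∈ W) :
    ∀ (T : Finset (Fin n)) (v : Fin n → V), (∀ k, v k ∈ L k) → (∀ k, k ∉ T → v k = 0) →
      (∑ k, v k) ∈ W → ∀ k, v k ∈ W := by
  intro T
  induction T using Finset.strongInduction with
  | _ T ih =>
  intro v hvL hv0 hsW k
  by_cases hvk : v k = 0
  · rw [hvk]; exact W.zero_mem
  have hkT : k ∈ T := by
    by_contra h
    exact hvk (hv0 k h)
  by_cases hj : ∃ j ∈ T, j ≠ k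
  · obtain ⟨j, hjT, hjk⟩ := hj
    -- find a group element separating the characters
    have hχne : χ j ≠ χ k := fun h => hjk (hdist h)
    obtain ⟨g, hg⟩ := Function.ne_iff.mp hχne
    set v' : Fin n → V := fun m => χ m g • v m - χ j g • v m with hv'
    have hv'L : ∀ m, v' m ∈ L m := fun m =>
      (L m).sub_mem ((L m).smul_mem _ (hvL m)) ((L m).smul_mem _ (hvL m))
    have hv'0 : ∀ m, m ∉ T.erase j → v' m = 0 := by
      intro m hm
      rw [Finset.mem_erase, not_and_or] at hm
      rcases hm with h | h
      · push_neg at h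
        simp only [hv', h, sub_self]
      · simp only [hv', hv0 m h, smul_zero, sub_self]
    have hsum' : (∑ m, v' m) ∈ W := by
      have h1 : ∑ m, v' m = ρ g (∑ m, v m) - χ j g • ∑ m, v m := by
        rw [map_sum, Finset.smul_sum, ← Finset.sum_sub_distrib]
        refine Finset.sum_congr rfl fun m _ => ?_
        rw [hχ m g (v m) (hvL m)]
      rw [h1]
      exact W.sub_mem (hW g _ hsW) (W.smul_mem _ hsW)
    have hv'W : v' k ∈ W :=
      ih (T.erase j) (Finset.erase_ssubset hjT) v' hv'L hv'0 hsum' k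
    have hv'k : v' k = (χ k g - χ j g) • v k := by
      simp only [hv', sub_smul]
    have hcne : χ k g - χ j g ≠ 0 := sub_ne_zero.mpr (Ne.symm hg)
    have := W.smul_mem (χ k g - χ j g)⁻¹ (hv'k ▸ hv'W)
    rwa [smul_smul, inv_mul_cancel₀ hcne, one_smul] at this
  · -- T ⊆ {k}
    push_neg at hj
    have hsum : ∑ m, v m = v k := by
      apply Finset.sum_eq_single k
      · intro m _ hmk
        apply hv0
        intro hmT
        exact hmk (hj m hmT)
      · intro h
        exact absurd (Finset.mem_univ k) h
    rwa [← hsum]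

/-- Counting invariant flags in a multiplicity-free module: if `V = ⊕ₖ L k` is an
internal direct sum of `n` lines on which `G` acts by pairwise distinct characters,
then the set of `r`-tuples of `G`-invariant subspaces forming an internal direct sum
decomposition of `V` with prescribed dimensions `n 1, …, n r` is finite of
cardinality the multinomial coefficient `n! / (n 1! ⋯ n r!)`. -/
theorem card_invariant_flags_eq_multinomial
    {K : Type*} [Field K] {G : Type*} [Group G]
    {V : Type*} [AddCommGroup V] [Module K V] [FiniteDimensional K V]
    (n : ℕ) (hdimV : Module.finrank K V = n)
    (ρ : Representation K G V)
    (L : Fin n → Submodule K V) (hinternal : DirectSum.IsInternal L)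
    (hdim : ∀ k, Module.finrank K (L k) = 1)
    (χ : Fin n → G → K)
    (hχ : ∀ (k : Fin n) (g : G), ∀ v ∈ L k, ρ g v = χ k g • v)
    (hdist : Function.Injective χ)
    (r : ℕ) (hr : 1 ≤ r) (nf : Fin r → ℕ) (hpos : ∀ i, 0 < nf i)
    (hsum : ∑ i, nf i = n) :
    {W : Fin r → Submodule K V |
        (∀ (i : Fin r) (g : G), ∀ w ∈ W i, ρ g w ∈ W i) ∧
        DirectSum.IsInternal W ∧
        ∀ i, Module.finrank K (W i) = nf i}.Finite ∧
    {W : Fin r → Submodule K V |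
        (∀ (i : Fin r) (g : G), ∀ w ∈ W i, ρ g w ∈ W i) ∧
        DirectSum.IsInternal W ∧
        ∀ i, Module.finrank K (W i) = nf i}.ncard
      = Nat.multinomial Finset.univ nf := by
  classical
  obtain ⟨hLind, hLtop⟩ :=
    (DirectSum.isInternal_submodule_iff_iSupIndep_and_iSup_eq_top L).mp hinternal
  -- choose a spanning vector in each line
  have hex : ∀ k, ∃ v : V, v ∈ L k ∧ v ≠ 0 ∧ L k = Submodule.span K {v} := by
    intro k
    have h1 : Nontrivial (L k) := Module.finrank_pos_iff.mp (by rw [hdim k]; norm_num)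
    obtain ⟨v, hv⟩ := exists_ne (0 : L k)
    have hv' : (v : V) ≠ 0 := fun h => hv (Subtype.ext h)
    refine ⟨v, v.2, hv', ?_⟩
    have hle : Submodule.span K {(v : V)} ≤ L k := Submodule.span_le.mpr (by simp [v.2])
    have h2 : finrank K (Submodule.span K {(v : V)}) = 1 := finrank_span_singleton hv'
    exact (Submodule.eq_of_le_of_finrank_eq hle (by rw [h2, hdim k])).symm
  choose e heL hene hLe using hex
  -- build a basis from these vectors
  have hLI : LinearIndependent K e := hLind.linearIndependent L heL hene
  have hsp : ⊤ ≤ Submodule.span K (Set.range e) := by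
    rw [← hLtop]
    refine iSup_le fun k => ?_
    rw [hLe k]
    exact Submodule.span_mono (Set.singleton_subset_iff.mpr ⟨k, rfl⟩)
  set b : Basis (Fin n) K V := Basis.mk hLI hsp with hbdef
  have hb : ∀ k, b k = e k := fun k => Basis.mk_apply hLI hsp k
  have hbL : ∀ k, b k ∈ L k := fun k => (hb k).symm ▸ heL k
  -- finrank of a span of part of the basis
  have hrank : ∀ t : Finset (Fin n), finrank K (Submodule.span K (⇑b '' ↑t)) = t.card := by
    intro t
    have h1 : LinearIndependent K (Subtype.val : (⇑b '' ↑t : Set V) → V) :=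
      (b.linearIndependent.linearIndepOn_id).mono
        (Set.image_subset_range b (↑t : Set (Fin n)) |>.trans (le_refl _))
    have h2 : (⇑b '' ↑t : Set V) = ↑(t.image b) := (Finset.coe_image).symm
    rw [h2] at h1 ⊢
    rw [finrank_span_finset_eq_card h1, Finset.card_image_of_injective _ b.injective]
  -- invariance of spans of basis vectors
  have hinv : ∀ s : Set (Fin n), ∀ g : G, ∀ w ∈ Submodule.span K (⇑b '' s),
      ρ g w ∈ Submodule.span K (⇑b '' s) := by
    intro s g w hw
    have hle : Submodule.map (ρ g) (Submodule.span K (⇑b '' s)) ≤ Submodule.span K (⇑b '' s) := by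
      rw [Submodule.map_span]
      refine Submodule.span_le.mpr ?_
      rintro _ ⟨_, ⟨k, hk, rfl⟩, rfl⟩
      rw [hχ k g (b k) (hbL k)]
      exact Submodule.smul_mem _ _ (Submodule.subset_span ⟨k, hk, rfl⟩)
    exact hle (Submodule.mem_map_of_mem hw)
  -- the map from functions to flags
  set Φ : (Fin n → Fin r) → (Fin r → Submodule K V) :=
    fun f i => Submodule.span K (⇑b '' {k | f k = i}) with hΦ
  set Sf : Set (Fin n → Fin r) :=
    {f | ∀ i, (Finset.univ.filter fun k => f k = i).card = nf i} with hSf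
  -- Φ f is always internal
  have hΦint : ∀ f : Fin n → Fin r, DirectSum.IsInternal (Φ f) := by
    intro f
    rw [DirectSum.isInternal_submodule_iff_iSupIndep_and_iSup_eq_top]
    constructor
    · rw [iSupIndep_def]
      intro i
      have h1 : (⨆ j, ⨆ (_ : j ≠ i), Φ f j)
          = Submodule.span K (⇑b '' ⋃ j, ⋃ (_ : j ≠ i), {k | f k = j}) := by
        simp only [hΦ, Set.image_iUnion, Submodule.span_iUnion]
      rw [h1]
      apply b.linearIndependent.disjoint_span_image
      rw [Set.disjoint_left]
      rintro k hk hk'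
      simp only [Set.mem_iUnion, Set.mem_setOf_eq] at hk hk'
      obtain ⟨j, hji, hfk⟩ := hk'
      exact hji (hfk ▸ hk ▸ rfl)
    · have h1 : (⨆ i, Φ f i) = Submodule.span K (⇑b '' ⋃ i, {k | f k = i}) := by
        simp only [hΦ, Set.image_iUnion, Submodule.span_iUnion]
      rw [h1]
      have h2 : (⋃ i, {k | f k = i}) = Set.univ := by
        ext k; simp only [Set.mem_iUnion, Set.mem_setOf_eq, Set.mem_univ, iff_true]
        exact ⟨f k, rfl⟩
      rw [h2, Set.image_univ, b.span_eq]
  -- the set of flags is the image of Sf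
  have hset : {W : Fin r → Submodule K V |
      (∀ (i : Fin r) (g : G), ∀ w ∈ W i, ρ g w ∈ W i) ∧
      DirectSum.IsInternal W ∧
      ∀ i, Module.finrank K (W i) = nf i} = Φ '' Sf := by
    ext W
    constructor
    · rintro ⟨hWinv, hWint, hWrank⟩
      obtain ⟨hWind, hWtop⟩ :=
        (DirectSum.isInternal_submodule_iff_iSupIndep_and_iSup_eq_top W).mp hWint
      set tS : Fin r → Finset (Fin n) :=
        fun i => Finset.univ.filter fun k => b k ∈ W i with htS
      have hWspan : ∀ i, W i = Submodule.span K (⇑b '' ↑(tS i)) := by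
        intro i
        apply le_antisymm
        · intro w hw
          have hrepr := b.sum_repr w
          have hvW : ∀ k, b.repr w k • b k ∈ W i := by
            apply aux_components ρ L χ hχ hdist (W i) (hWinv i) Finset.univ
              (fun k => b.repr w k • b k)
              (fun k => (L k).smul_mem _ (hbL k))
              (fun k hk => absurd (Finset.mem_univ k) hk)
            rw [hrepr]; exact hw
          rw [← hrepr]
          apply Submodule.sum_mem
          intro k _
          by_cases hk : b.repr w k = 0
          · rw [hk, zero_smul]; exact Submodule.zero_mem _
          · have hbk : b k ∈ W i := by
              have := (W i).smul_mem (b.repr w k)⁻¹ (hvW k)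
              rwa [smul_smul, inv_mul_cancel₀ hk, one_smul] at this
            refine Submodule.smul_mem _ _ (Submodule.subset_span ⟨k, ?_, rfl⟩)
            simp only [htS, Finset.coe_filter, Finset.mem_univ, true_and, Set.mem_setOf_eq]
            exact hbk
        · rw [Submodule.span_le]
          rintro _ ⟨k, hk, rfl⟩
          simp only [htS, Finset.coe_filter, Finset.mem_univ, true_and,
            Set.mem_setOf_eq] at hk
          exact hk
      have hcard : ∀ i, (tS i).card = nf i := by
        intro i
        rw [← hrank (tS i), ← hWspan i]
        exact hWrank i
      have hdisj : ∀ i j, i ≠ j → ∀ k, k ∈ tS i → k ∈ tS j → False := by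
        intro i j hij k hki hkj
        have h1 : b k ∈ W i := by
          simp only [htS, Finset.mem_filter] at hki; exact hki.2
        have h2 : b k ∈ W j := by
          simp only [htS, Finset.mem_filter] at hkj; exact hkj.2
        exact b.ne_zero k
          (Submodule.disjoint_def.mp (hWind.pairwiseDisjoint hij) _ h1 h2)
      have hcover : ∀ k, ∃ i, k ∈ tS i := by
        intro k
        by_contra h
        push_neg at h
        have hU : (Finset.univ.biUnion tS).card = n := by
          rw [Finset.card_biUnion
            (fun i _ j _ hij => Finset.disjoint_left.mpr
              fun k hk hk' => hdisj i j hij k hk hk')]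
          simp only [hcard]
          exact hsum
        have hUuniv : Finset.univ.biUnion tS = Finset.univ :=
          Finset.eq_univ_of_card _ (by rw [hU, Fintype.card_fin])
        have : k ∈ Finset.univ.biUnion tS := hUuniv ▸ Finset.mem_univ k
        obtain ⟨i, _, hi⟩ := Finset.mem_biUnion.mp this
        exact h i hi
      choose f hf using hcover
      have hfib : ∀ i, (Finset.univ.filter fun k => f k = i) = tS i := by
        intro i
        ext k
        simp only [Finset.mem_filter, Finset.mem_univ, true_and]
        constructor
        · rintro rfl; exact hf k
        · intro hk
          by_contra hne
          exact hdisj _ _ hne k (hf k) hk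
      refine ⟨f, fun i => by rw [hfib i, hcard], ?_⟩
      funext i
      have h3 : {k | f k = i} = ↑(tS i) := by
        rw [← hfib i]; ext k
        simp only [Set.mem_setOf_eq, Finset.coe_filter, Finset.mem_univ, true_and]
      show Submodule.span K (⇑b '' {k | f k = i}) = W i
      rw [h3, hWspan i]
    · rintro ⟨f, hfSf, rfl⟩
      refine ⟨fun i g w hw => hinv _ g w hw, hΦint f, ?_⟩
      intro i
      have h3 : {k | f k = i} = ↑(Finset.univ.filter fun k => f k = i) := by
        ext k
        simp only [Set.mem_setOf_eq, Finset.coe_filter, Finset.mem_univ, true_and]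
      show finrank K (Submodule.span K (⇑b '' {k | f k = i})) = nf i
      rw [h3, hrank]
      exact hfSf i
  -- injectivity
  have hinj : Set.InjOn Φ Sf := by
    intro f _ f' _ h
    funext k
    have h1 : b k ∈ Φ f (f k) := Submodule.subset_span ⟨k, rfl, rfl⟩
    rw [h] at h1
    have h2 : b k ∈ Submodule.span K (⇑b '' {m | f' m = f k}) := h1
    rw [b.self_mem_span_image] at h2
    exact h2.symm
  constructor
  · rw [hset]
    exact (Set.toFinite Sf).image Φ
  · rw [hset, Set.ncard_image_of_injOn hinj]
    have h1 : Sf.ncard = (Finset.univ.filter fun f : Fin n → Fin r =>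
        ∀ i, (Finset.univ.filter fun k => f k = i).card = nf i).card := by
      rw [← Set.ncard_coe_finset]
      congr 1
      ext f
      simp only [hSf, Set.mem_setOf_eq, Finset.coe_filter, Finset.mem_univ, true_and]
    rw [h1]
    have h2 := aux_count r (Fin n) nf (by rw [Fintype.card_fin]; exact hsum.symm)
    have h3 := Nat.multinomial_spec Finset.univ nf
    have hpos' : 0 < ∏ i, (nf i).factorial :=
      Finset.prod_pos fun i _ => Nat.factorial_pos _
    apply Nat.eq_of_mul_eq_mul_right hpos'
    rw [h2, ← h3, mul_comm]
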